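/- Consider Q elements q = 1,…,Q with sizes Δx_q > 0, numerical flux vectors f*_q ∈ R^{N+1} satisfying the periodic matching condition (f*_q)_{N+1} = (f*_{q+1})_1 for all q (indices mod Q), and arbitrary blending factors α_q ∈ R. Suppose the operators satisfy 1^T Δ^(V) = 0^T, 1^T (P D̃) = 0^T and 1^T (P B^(0)) = N · 1^T Δ^(S). Then the single-level blended discretization ∂_t ū_q = (1-α_q)·(-N/Δx_q)·Δ f*_q + α_q·(1/Δx_q)·(P D̃ f̃_q - P B^(0) f*_q) is conservative: ∑_{q=1}^{Q} Δx_q · 1^T ∂_t ū_q = 0, for any choice of volume flux vectors f̃_q ∈ R^N. -/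

import Mathlib

open Matrix Finset

lemma sum_mulVec_eq {m n : ℕ} (M : Matrix (Fin m) (Fin n) ℝ) (v : Fin n → ℝ) :
    ∑ i, M.mulVec v i = ∑ j, (Matrix.vecMul (fun _ => (1:ℝ)) M) j * v j := by
  simp only [Matrix.mulVec, Matrix.vecMul, dotProduct, one_mul]
  rw [Finset.sum_comm]
  simp [Finset.sum_mul]

/-- the single-level blended discretization with a common
surface flux is conservative for arbitrary blending factors. -/
theorem single_level_blending_conservative (N Q : ℕ) (hN : 0 < N) [NeZero Q]
    (ΔV ΔS : Matrix (Fin N) (Fin (N + 1)) ℝ)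
    (hΔS : ∀ i j, ΔS i j =
      if (i : ℕ) = 0 ∧ (j : ℕ) = 0 then -1
      else if (i : ℕ) = N - 1 ∧ (j : ℕ) = N then 1
      else 0)
    (hΔV : Matrix.vecMul (fun _ => (1 : ℝ)) ΔV = 0)
    (PD : Matrix (Fin N) (Fin N) ℝ)
    (hPD : Matrix.vecMul (fun _ => (1 : ℝ)) PD = 0)
    (PB : Matrix (Fin N) (Fin (N + 1)) ℝ)
    (hPB : Matrix.vecMul (fun _ => (1 : ℝ)) PB =
      (N : ℝ) • Matrix.vecMul (fun _ => (1 : ℝ)) ΔS)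
    (Δx : Fin Q → ℝ) (hΔx : ∀ q, 0 < Δx q)
    (α : Fin Q → ℝ)
    (fstar : Fin Q → Fin (N + 1) → ℝ)
    (hmatch : ∀ q : Fin Q, fstar q (Fin.last N) = fstar (q + 1) 0)
    (fvol : Fin Q → Fin N → ℝ)
    (rhs : Fin Q → Fin N → ℝ)
    (hrhs : ∀ q, rhs q =
      (1 - α q) • ((-(N : ℝ) / Δx q) • ((ΔV + ΔS).mulVec (fstar q)))
      + (α q) • ((1 / Δx q) • (PD.mulVec (fvol q) - PB.mulVec (fstar q)))) :
    ∑ q, Δx q * ∑ i, rhs q i = 0 := by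
  -- column sums of ΔS
  have hcol : Matrix.vecMul (fun _ => (1:ℝ)) ΔS =
      fun j => (if j = Fin.last N then (1:ℝ) else 0) - (if j = 0 then 1 else 0) := by
    funext j
    simp only [Matrix.vecMul, dotProduct, one_mul]
    rcases eq_or_ne j 0 with rfl | hj0
    · have h0l : (0 : Fin (N+1)) ≠ Fin.last N := by
        simp only [Ne, Fin.ext_iff, Fin.val_zero, Fin.val_last]; omega
      have hval : ∀ i : Fin N, ΔS i 0 = if i = (⟨0, hN⟩ : Fin N) then (-1:ℝ) else 0 := by
        intro i
        rw [hΔS]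
        split_ifs <;> clear hΔS hPB hrhs <;> simp_all [Fin.ext_iff]
      rw [Finset.sum_congr rfl (fun i _ => hval i)]
      simp [h0l]
    · rcases eq_or_ne j (Fin.last N) with rfl | hjl
      · have hval : ∀ i : Fin N, ΔS i (Fin.last N) =
            if i = (⟨N-1, by omega⟩ : Fin N) then (1:ℝ) else 0 := by
          intro i
          rw [hΔS]
          split_ifs <;> clear hΔS hPB hrhs <;> simp_all [Fin.ext_iff]
        rw [Finset.sum_congr rfl (fun i _ => hval i)]
        have : Fin.last N ≠ (0 : Fin (N+1)) := fun h => hj0 h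
        simp [this]
      · have h1 : (j : ℕ) ≠ 0 := fun h => hj0 (Fin.ext (by simpa using h))
        have h2 : (j : ℕ) ≠ N := fun h => hjl (Fin.ext (by simpa using h))
        have hval : ∀ i : Fin N, ΔS i j = 0 := by
          intro i; rw [hΔS]; simp [h1, h2]
        simp [hval, hj0, hjl]
  have hSf : ∀ f : Fin (N+1) → ℝ,
      ∑ j, (Matrix.vecMul (fun _ => (1:ℝ)) ΔS) j * f j = f (Fin.last N) - f 0 := by
    intro f
    rw [hcol]
    simp [sub_mul, Finset.sum_sub_distrib, ite_mul]
  -- per-element sum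
  have key : ∀ q, Δx q * ∑ i, rhs q i =
      -(N:ℝ) * (fstar q (Fin.last N) - fstar q 0) := by
    intro q
    have hx := (hΔx q).ne'
    have e1 : ∑ i, ((ΔV + ΔS).mulVec (fstar q)) i
        = fstar q (Fin.last N) - fstar q 0 := by
      rw [sum_mulVec_eq]
      simp only [Matrix.vecMul_add, hΔV, zero_add, Pi.add_apply, Pi.zero_apply]
      exact hSf _
    have e2 : ∑ i, (PD.mulVec (fvol q)) i = 0 := by
      rw [sum_mulVec_eq, hPD]; simp
    have e3 : ∑ i, (PB.mulVec (fstar q)) i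
        = (N:ℝ) * (fstar q (Fin.last N) - fstar q 0) := by
      rw [sum_mulVec_eq, hPB]
      simp only [Pi.smul_apply, smul_eq_mul, mul_assoc]
      rw [← Finset.mul_sum, hSf]
    have hsum : ∑ i, rhs q i =
        (1 - α q) * ((-(N:ℝ) / Δx q) * (fstar q (Fin.last N) - fstar q 0))
        + α q * ((1 / Δx q) * (0 - (N:ℝ) * (fstar q (Fin.last N) - fstar q 0))) := by
      rw [hrhs]
      simp only [Pi.add_apply, Pi.smul_apply, Pi.sub_apply, smul_eq_mul,
        Finset.sum_add_distrib, ← Finset.mul_sum, Finset.sum_sub_distrib, e1, e2, e3]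
    rw [hsum]
    field_simp
    ring
  rw [Finset.sum_congr rfl (fun q _ => key q)]
  have ht : ∑ q, fstar q (Fin.last N) = ∑ q, fstar q 0 := by
    calc ∑ q, fstar q (Fin.last N) = ∑ q, fstar (q+1) 0 :=
          Finset.sum_congr rfl (fun q _ => hmatch q)
      _ = ∑ q, fstar q 0 := Fintype.sum_equiv (Equiv.addRight 1) _ _ (fun q => rfl)
  rw [← Finset.mul_sum, Finset.sum_sub_distrib, ht]
  simp
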